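/- Let T be an endofunctor on a category C and μ : T∘T → T, η : 𝟭 → T natural transformations (where 𝟭 is the identity functor). The following are equivalent: (1) (T, μ, η) is a monad, i.e., μ ∘ᵥ Tμ = μ ∘ᵥ μT and μ ∘ᵥ ηT = μ ∘ᵥ Tη = id; (2) T is a terminal object in the rewrite category with objects Tⁿ for n ≥ 0 and morphisms the (μ,η)-derivations; that is, for every n ≥ 0 there exists a (μ,η)-derivation Tⁿ → T, and any two (μ,η)-derivations Tⁿ → T are equal. -/

import Mathlib

open CategoryTheory
open CategoryTheory.Functor (whiskerLeft whiskerRight whiskerRight_comp)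

universe v u

namespace RewriteCat

variable {C : Type u} [Category.{v} C]

/-- `fpow T n` is the `n`-fold composite `Tⁿ` of the endofunctor `T`, with `T⁰ = 𝟭 C`. -/
def fpow (T : C ⥤ C) : ℕ → (C ⥤ C)
  | 0 => 𝟭 C
  | n + 1 => fpow T n ⋙ T

theorem fpow_add (T : C ⥤ C) (m n : ℕ) : fpow T (m + n) = fpow T m ⋙ fpow T n := by
  induction n with
  | zero =>
      show fpow T m = fpow T m ⋙ 𝟭 C
      rw [Functor.comp_id]
  | succ n ih =>
      show fpow T (m + n) ⋙ T = fpow T m ⋙ (fpow T n ⋙ T)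
      rw [ih, Functor.assoc]

theorem fpow_zero (T : C ⥤ C) : fpow T 0 = 𝟭 C := rfl

theorem fpow_one (T : C ⥤ C) : fpow T 1 = T := by
  show 𝟭 C ⋙ T = T
  rw [Functor.id_comp]

theorem fpow_two (T : C ⥤ C) : fpow T 2 = T ⋙ T := by
  show (𝟭 C ⋙ T) ⋙ T = T ⋙ T
  rw [Functor.id_comp]

/-- `T^{i+a+j}` decomposes as `Tʲ` (applied first), then the middle `Tᵃ`, then `Tⁱ`
(applied last, i.e. written leftmost in the string `Tⁱ Tᵃ Tʲ`). -/
theorem fpow_split (T : C ⥤ C) (i a j : ℕ) :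
    fpow T (i + a + j) = fpow T j ⋙ fpow T a ⋙ fpow T i := by
  rw [show i + a + j = j + a + i by omega, fpow_add, fpow_add, Functor.assoc]

theorem fpow_split_two (T : C ⥤ C) (i j : ℕ) :
    fpow T (i + j + 2) = fpow T j ⋙ (T ⋙ T) ⋙ fpow T i := by
  rw [show i + j + 2 = i + 2 + j by omega, fpow_split, fpow_two]

theorem fpow_split_one (T : C ⥤ C) (i j : ℕ) :
    fpow T (i + j + 1) = fpow T j ⋙ T ⋙ fpow T i := by
  rw [show i + j + 1 = i + 1 + j by omega, fpow_split, fpow_one]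

theorem fpow_split_zero (T : C ⥤ C) (i j : ℕ) :
    fpow T (i + j) = fpow T j ⋙ 𝟭 C ⋙ fpow T i := by
  rw [show i + j = i + 0 + j by omega, fpow_split, fpow_zero]

/-- The whiskered rewrite rule `TⁱμTʲ : T^{i+j+2} ⟶ T^{i+j+1}`, with components
`Tⁱ(μ_{Tʲ A})`. -/
def muRule (T : C ⥤ C) (μ : T ⋙ T ⟶ T) (i j : ℕ) :
    fpow T (i + j + 2) ⟶ fpow T (i + j + 1) :=
  eqToHom (fpow_split_two T i j) ≫
    Functor.whiskerLeft (fpow T j) (Functor.whiskerRight μ (fpow T i)) ≫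
      eqToHom (fpow_split_one T i j).symm

/-- The whiskered rewrite rule `TⁱηTʲ : T^{i+j} ⟶ T^{i+j+1}`, with components
`Tⁱ(η_{Tʲ A})`. -/
def etaRule (T : C ⥤ C) (η : 𝟭 C ⟶ T) (i j : ℕ) :
    fpow T (i + j) ⟶ fpow T (i + j + 1) :=
  eqToHom (fpow_split_zero T i j) ≫
    Functor.whiskerLeft (fpow T j) (Functor.whiskerRight η (fpow T i)) ≫
      eqToHom (fpow_split_one T i j).symm

/-- `μ`-derivations: the smallest class of natural transformations `Tᵃ ⟶ Tᵇ`
containing all identities and all whiskered rules `TⁱμTʲ`, closed under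
vertical composition. -/
inductive MuDeriv (T : C ⥤ C) (μ : T ⋙ T ⟶ T) : ∀ {a b : ℕ}, (fpow T a ⟶ fpow T b) → Prop
  | id (n : ℕ) : MuDeriv T μ (𝟙 (fpow T n))
  | rule (i j : ℕ) : MuDeriv T μ (muRule T μ i j)
  | comp {a b c : ℕ} {f : fpow T a ⟶ fpow T b} {g : fpow T b ⟶ fpow T c} :
      MuDeriv T μ f → MuDeriv T μ g → MuDeriv T μ (f ≫ g)

/-- `(μ,η)`-derivations: the smallest class of natural transformations `Tᵃ ⟶ Tᵇ`
containing all identities and all whiskered rules `TⁱμTʲ` and `TⁱηTʲ`, closed under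
vertical composition. -/
inductive MonadDeriv (T : C ⥤ C) (μ : T ⋙ T ⟶ T) (η : 𝟭 C ⟶ T) :
    ∀ {a b : ℕ}, (fpow T a ⟶ fpow T b) → Prop
  | id (n : ℕ) : MonadDeriv T μ η (𝟙 (fpow T n))
  | mu_rule (i j : ℕ) : MonadDeriv T μ η (muRule T μ i j)
  | eta_rule (i j : ℕ) : MonadDeriv T μ η (etaRule T η i j)
  | comp {a b c : ℕ} {f : fpow T a ⟶ fpow T b} {g : fpow T b ⟶ fpow T c} :
      MonadDeriv T μ η f → MonadDeriv T μ η g → MonadDeriv T μ η (f ≫ g)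

section Collapse

variable (T : C ⥤ C) (μ : T ⋙ T ⟶ T) (η : 𝟭 C ⟶ T)

/-- Partial collapse `Tⁱ ∘ T ⟶ T`. -/
def ehat : ∀ i : ℕ, (T ⋙ fpow T i ⟶ T)
  | 0 => 𝟙 T
  | i + 1 => whiskerRight (ehat i) T ≫ μ

/-- Full collapse `Tⁿ ⟶ T`. -/
def dhat : ∀ n : ℕ, (fpow T n ⟶ T)
  | 0 => η
  | n + 1 => whiskerRight (dhat n) T ≫ μ

/-- A canonical derivation `Tⁿ ⟶ T`. -/
def cD : ∀ n : ℕ, (fpow T n ⟶ fpow T 1)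
  | 0 => etaRule T η 0 0
  | 1 => 𝟙 _
  | n + 2 => muRule T μ n 0 ≫ cD (n + 1)

theorem cD_deriv : ∀ n : ℕ, MonadDeriv T μ η (cD T μ η n)
  | 0 => .eta_rule 0 0
  | 1 => .id 1
  | n + 2 => .comp (.mu_rule n 0) (cD_deriv (n + 1))

theorem fpow_comm_eq (i j : ℕ) : fpow T (i + j) = fpow T j ⋙ fpow T i := by
  rw [Nat.add_comm, fpow_add]

theorem dhat_congr {m n : ℕ} (h : m = n) :
    dhat T μ η m = eqToHom (by rw [h]) ≫ dhat T μ η n := by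
  subst h; simp

theorem wR_eqToHom {F G : C ⥤ C} (h : F = G) (K : C ⥤ C) :
    whiskerRight (eqToHom h) K = eqToHom (by rw [h]) := by
  subst h; simp

theorem dhat_one (hright : whiskerRight η T ≫ μ = 𝟙 T) : dhat T μ η 1 = 𝟙 T := by
  show whiskerRight (dhat T μ η 0) T ≫ μ = 𝟙 T
  show whiskerRight η T ≫ μ = 𝟙 T
  exact hright

theorem INmu (hassoc : whiskerRight μ T ≫ μ = whiskerLeft T μ ≫ μ)
    (hright : whiskerRight η T ≫ μ = 𝟙 T) : ∀ j : ℕ,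
    whiskerLeft (fpow T j) μ ≫ dhat T μ η (j + 1) = dhat T μ η (j + 2)
  | 0 => by
      show whiskerLeft (fpow T 0) μ ≫ dhat T μ η 1 =
        whiskerRight (dhat T μ η 1) T ≫ μ
      rw [dhat_one T μ η hright]
      show μ ≫ 𝟙 T = whiskerRight (𝟙 T) T ≫ μ
      simp
  | j + 1 => by
      have ex : whiskerLeft (fpow T (j + 1)) μ ≫ whiskerRight (dhat T μ η (j + 1)) T
          = whiskerRight (whiskerRight (dhat T μ η (j + 1)) T) T ≫ whiskerLeft T μ := by
        ext A
        exact (μ.naturality ((dhat T μ η (j + 1)).app A)).symm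
      show whiskerLeft (fpow T (j + 1)) μ ≫ (whiskerRight (dhat T μ η (j + 1)) T ≫ μ)
          = whiskerRight (dhat T μ η (j + 2)) T ≫ μ
      rw [← Category.assoc, ex, Category.assoc, ← hassoc, ← Category.assoc,
        ← whiskerRight_comp]
      rfl

theorem INeta (hleft : whiskerLeft T η ≫ μ = 𝟙 T)
    (hright : whiskerRight η T ≫ μ = 𝟙 T) : ∀ j : ℕ,
    whiskerLeft (fpow T j) η ≫ dhat T μ η (j + 1) = dhat T μ η j
  | 0 => by
      show whiskerLeft (fpow T 0) η ≫ dhat T μ η 1 = η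
      rw [dhat_one T μ η hright]
      show η ≫ 𝟙 T = η
      simp
  | j + 1 => by
      have ex : whiskerLeft (fpow T (j + 1)) η ≫ whiskerRight (dhat T μ η (j + 1)) T
          = dhat T μ η (j + 1) ≫ whiskerLeft T η := by
        ext A
        exact (η.naturality ((dhat T μ η (j + 1)).app A)).symm
      show whiskerLeft (fpow T (j + 1)) η ≫ (whiskerRight (dhat T μ η (j + 1)) T ≫ μ)
          = dhat T μ η (j + 1)
      rw [← Category.assoc, ex, Category.assoc, hleft, Category.comp_id]

theorem DSG : ∀ i j : ℕ, dhat T μ η (i + j) =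
    eqToHom (fpow_comm_eq T i j) ≫ whiskerRight (dhat T μ η j) (fpow T i) ≫ ehat T μ i
  | 0, j => by
      rw [dhat_congr T μ η (Nat.zero_add j)]
      show eqToHom _ ≫ dhat T μ η j = eqToHom _ ≫ dhat T μ η j ≫ 𝟙 T
      rw [Category.comp_id]
  | i + 1, j => by
      have ih' : whiskerRight (dhat T μ η j) (fpow T i) ≫ ehat T μ i
          = eqToHom (fpow_comm_eq T i j).symm ≫ dhat T μ η (i + j) := by
        rw [DSG i j, ← Category.assoc, eqToHom_trans, eqToHom_refl, Category.id_comp]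
      have w := whiskerRight_comp (whiskerRight (dhat T μ η j) (fpow T i))
        (ehat T μ i) T
      show dhat T μ η (i + 1 + j) =
        eqToHom (fpow_comm_eq T (i + 1) j) ≫
          whiskerRight (whiskerRight (dhat T μ η j) (fpow T i)) T ≫
            (whiskerRight (ehat T μ i) T ≫ μ)
      erw [← Category.assoc (whiskerRight (whiskerRight (dhat T μ η j) (fpow T i)) T),
        ← w, ih', whiskerRight_comp, wR_eqToHom]
      erw [← Category.assoc, ← Category.assoc, eqToHom_trans]
      rw [dhat_congr T μ η (show i + 1 + j = (i + j) + 1 by omega)]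
      show eqToHom _ ≫ whiskerRight (dhat T μ η (i + j)) T ≫ μ =
        (eqToHom _ ≫ whiskerRight (dhat T μ η (i + j)) T) ≫ μ
      rw [Category.assoc]

theorem rule_mu (hassoc : whiskerRight μ T ≫ μ = whiskerLeft T μ ≫ μ)
    (hleft : whiskerLeft T η ≫ μ = 𝟙 T) (hright : whiskerRight η T ≫ μ = 𝟙 T)
    (i j : ℕ) :
    muRule T μ i j ≫ dhat T μ η (i + j + 1) = dhat T μ η (i + j + 2) := by
  have h1 : dhat T μ η (i + j + 1) =
      eqToHom (fpow_comm_eq T i (j + 1)) ≫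
        whiskerRight (dhat T μ η (j + 1)) (fpow T i) ≫ ehat T μ i :=
    DSG T μ η i (j + 1)
  have w := whiskerRight_comp (whiskerLeft (fpow T j) μ) (dhat T μ η (j + 1)) (fpow T i)
  have A1 : whiskerLeft (fpow T j) (whiskerRight μ (fpow T i)) ≫
      whiskerRight (dhat T μ η (j + 1)) (fpow T i) ≫ ehat T μ i =
      whiskerRight (dhat T μ η (j + 2)) (fpow T i) ≫ ehat T μ i := by
    rw [show whiskerLeft (fpow T j) (whiskerRight μ (fpow T i)) =
      whiskerRight (whiskerLeft (fpow T j) μ) (fpow T i) from rfl]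
    erw [← Category.assoc, ← w, INmu T μ η hassoc hright j]
    rfl
  have cancel : eqToHom (fpow_split_one T i j).symm ≫ eqToHom (fpow_comm_eq T i (j + 1))
      = 𝟙 (fpow T j ⋙ T ⋙ fpow T i) := by
    rw [eqToHom_trans]; exact rfl
  show (eqToHom (fpow_split_two T i j) ≫
      whiskerLeft (fpow T j) (whiskerRight μ (fpow T i)) ≫
        eqToHom (fpow_split_one T i j).symm) ≫ dhat T μ η (i + j + 1)
      = dhat T μ η (i + j + 2)
  rw [h1]
  erw [Category.assoc, Category.assoc, ← Category.assoc (eqToHom (fpow_split_one T i j).symm),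
    cancel, Category.id_comp, A1]
  exact (DSG T μ η i (j + 2)).symm

theorem rule_eta (hassoc : whiskerRight μ T ≫ μ = whiskerLeft T μ ≫ μ)
    (hleft : whiskerLeft T η ≫ μ = 𝟙 T) (hright : whiskerRight η T ≫ μ = 𝟙 T)
    (i j : ℕ) :
    etaRule T η i j ≫ dhat T μ η (i + j + 1) = dhat T μ η (i + j) := by
  have h1 : dhat T μ η (i + j + 1) =
      eqToHom (fpow_comm_eq T i (j + 1)) ≫
        whiskerRight (dhat T μ η (j + 1)) (fpow T i) ≫ ehat T μ i :=
    DSG T μ η i (j + 1)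
  have w := whiskerRight_comp (whiskerLeft (fpow T j) η) (dhat T μ η (j + 1)) (fpow T i)
  have A1 : whiskerLeft (fpow T j) (whiskerRight η (fpow T i)) ≫
      whiskerRight (dhat T μ η (j + 1)) (fpow T i) ≫ ehat T μ i =
      whiskerRight (dhat T μ η j) (fpow T i) ≫ ehat T μ i := by
    rw [show whiskerLeft (fpow T j) (whiskerRight η (fpow T i)) =
      whiskerRight (whiskerLeft (fpow T j) η) (fpow T i) from rfl]
    erw [← Category.assoc, ← w, INeta T μ η hleft hright j]
  have cancel : eqToHom (fpow_split_one T i j).symm ≫ eqToHom (fpow_comm_eq T i (j + 1))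
      = 𝟙 (fpow T j ⋙ T ⋙ fpow T i) := by
    rw [eqToHom_trans]; exact rfl
  show (eqToHom (fpow_split_zero T i j) ≫
      whiskerLeft (fpow T j) (whiskerRight η (fpow T i)) ≫
        eqToHom (fpow_split_one T i j).symm) ≫ dhat T μ η (i + j + 1)
      = dhat T μ η (i + j)
  rw [h1]
  erw [Category.assoc, Category.assoc, ← Category.assoc (eqToHom (fpow_split_one T i j).symm),
    cancel, Category.id_comp, A1]
  exact (DSG T μ η i j).symm

theorem key (hassoc : whiskerRight μ T ≫ μ = whiskerLeft T μ ≫ μ)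
    (hleft : whiskerLeft T η ≫ μ = 𝟙 T) (hright : whiskerRight η T ≫ μ = 𝟙 T)
    {a b : ℕ} {f : fpow T a ⟶ fpow T b} (hf : MonadDeriv T μ η f) :
    f ≫ dhat T μ η b = dhat T μ η a := by
  induction hf with
  | id n => exact Category.id_comp _
  | mu_rule i j => exact rule_mu T μ η hassoc hleft hright i j
  | eta_rule i j => exact rule_eta T μ η hassoc hleft hright i j
  | comp hf hg ihf ihg => rw [Category.assoc, ihg, ihf]

end Collapse


/-- **Theorem 4.2 of Kozen, "Natural Transformations as Rewrite Rules and Monad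
Composition"**.

For an endofunctor `T` on `C` and natural transformations `μ : T∘T ⟶ T`,
`η : 𝟭 ⟶ T`, the following are equivalent:

1. `(T, μ, η)` is a monad: `μ ∘ᵥ Tμ = μ ∘ᵥ μT` and `μ ∘ᵥ ηT = μ ∘ᵥ Tη = id`
   (`Tμ = whiskerRight μ T`, `μT = whiskerLeft T μ`, `ηT = whiskerLeft T η`,
   `Tη = whiskerRight η T`);
2. `T` is a terminal object in the rewrite category whose objects are the powers
   `Tⁿ` for `n ≥ 0` and whose morphisms are the `(μ,η)`-derivations: for every
   `n ≥ 0` there exists a `(μ,η)`-derivation `Tⁿ ⟶ T`, and any two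
   `(μ,η)`-derivations `Tⁿ ⟶ T` are equal. -/
theorem monad_iff_terminal
    (T : C ⥤ C) (μ : T ⋙ T ⟶ T) (η : 𝟭 C ⟶ T) :
    (Functor.whiskerRight μ T ≫ μ = Functor.whiskerLeft T μ ≫ μ ∧
      Functor.whiskerLeft T η ≫ μ = 𝟙 T ∧ Functor.whiskerRight η T ≫ μ = 𝟙 T)
      ↔
    ((∀ n : ℕ, ∃ f : fpow T n ⟶ fpow T 1, MonadDeriv T μ η f) ∧
      (∀ n : ℕ, ∀ f g : fpow T n ⟶ fpow T 1,
        MonadDeriv T μ η f → MonadDeriv T μ η g → f = g)) := by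
  constructor
  · rintro ⟨hassoc, hleft, hright⟩
    constructor
    · exact fun n => ⟨cD T μ η n, cD_deriv T μ η n⟩
    · intro n f g hf hg
      have Hf := key T μ η hassoc hleft hright hf
      have Hg := key T μ η hassoc hleft hright hg
      have h1 : dhat T μ η 1 = 𝟙 (fpow T 1) := dhat_one T μ η hright
      erw [h1, Category.comp_id] at Hf Hg
      exact Hf.trans Hg.symm
  · rintro ⟨hex, huniq⟩
    have m00 : muRule T μ 0 0 = μ := by
      show eqToHom (fpow_split_two T 0 0) ≫
        whiskerLeft (fpow T 0) (whiskerRight μ (fpow T 0)) ≫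
          eqToHom (fpow_split_one T 0 0).symm = μ
      erw [show eqToHom (fpow_split_two T 0 0) = 𝟙 (fpow T 2) from rfl,
        show eqToHom (fpow_split_one T 0 0).symm = 𝟙 (fpow T 1) from rfl,
        Category.id_comp]
      exact (Category.comp_id _).trans rfl
    have m10 : muRule T μ 1 0 = whiskerRight μ T := by
      show eqToHom (fpow_split_two T 1 0) ≫
        whiskerLeft (fpow T 0) (whiskerRight μ (fpow T 1)) ≫
          eqToHom (fpow_split_one T 1 0).symm = whiskerRight μ T
      erw [show eqToHom (fpow_split_two T 1 0) = 𝟙 (fpow T 3) from rfl,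
        show eqToHom (fpow_split_one T 1 0).symm = 𝟙 (fpow T 2) from rfl,
        Category.id_comp]
      exact (Category.comp_id _).trans rfl
    have m01 : muRule T μ 0 1 = whiskerLeft T μ := by
      show eqToHom (fpow_split_two T 0 1) ≫
        whiskerLeft (fpow T 1) (whiskerRight μ (fpow T 0)) ≫
          eqToHom (fpow_split_one T 0 1).symm = whiskerLeft T μ
      erw [show eqToHom (fpow_split_two T 0 1) = 𝟙 (fpow T 3) from rfl,
        show eqToHom (fpow_split_one T 0 1).symm = 𝟙 (fpow T 2) from rfl,
        Category.id_comp]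
      exact (Category.comp_id _).trans rfl
    have e10 : etaRule T η 1 0 = whiskerRight η T := by
      show eqToHom (fpow_split_zero T 1 0) ≫
        whiskerLeft (fpow T 0) (whiskerRight η (fpow T 1)) ≫
          eqToHom (fpow_split_one T 1 0).symm = whiskerRight η T
      erw [show eqToHom (fpow_split_zero T 1 0) = 𝟙 (fpow T 1) from rfl,
        show eqToHom (fpow_split_one T 1 0).symm = 𝟙 (fpow T 2) from rfl,
        Category.id_comp]
      exact (Category.comp_id _).trans rfl
    have e01 : etaRule T η 0 1 = whiskerLeft T η := by
      show eqToHom (fpow_split_zero T 0 1) ≫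
        whiskerLeft (fpow T 1) (whiskerRight η (fpow T 0)) ≫
          eqToHom (fpow_split_one T 0 1).symm = whiskerLeft T η
      erw [show eqToHom (fpow_split_zero T 0 1) = 𝟙 (fpow T 1) from rfl,
        show eqToHom (fpow_split_one T 0 1).symm = 𝟙 (fpow T 2) from rfl,
        Category.id_comp]
      exact (Category.comp_id _).trans rfl
    have hassoc := huniq 3 (muRule T μ 1 0 ≫ muRule T μ 0 0)
      (muRule T μ 0 1 ≫ muRule T μ 0 0)
      (.comp (.mu_rule 1 0) (.mu_rule 0 0)) (.comp (.mu_rule 0 1) (.mu_rule 0 0))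
    have hunitr := huniq 1 (etaRule T η 1 0 ≫ muRule T μ 0 0) (𝟙 (fpow T 1))
      (.comp (.eta_rule 1 0) (.mu_rule 0 0)) (.id 1)
    have hunitl := huniq 1 (etaRule T η 0 1 ≫ muRule T μ 0 0) (𝟙 (fpow T 1))
      (.comp (.eta_rule 0 1) (.mu_rule 0 0)) (.id 1)
    rw [m10, m01, m00] at hassoc
    rw [e10, m00] at hunitr
    rw [e01, m00] at hunitl
    exact ⟨hassoc, hunitl, hunitr⟩


end RewriteCat
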